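/- arXiv:1711.07218 — 2 statements merged into one kernel-verified Lean document; each statement's English description precedes it below -/
import Mathlib

section
/- Let m ≥ 1, let P_1, …, P_m be nonempty polytopes in ℝ^d (convex hulls of finite sets), let λ = (λ_1, …, λ_m) ∈ ℝ^m with λ_i > 0 for all i and Σ λ_i = 1, and let G be a nonempty exposed face of the Cayley polytope Cay(P_1, …, P_m) = conv(⋃_{i=1}^m P_i × {e_i}) ⊆ ℝ^d × ℝ^m. Then G ∩ (ℝ^d × {λ}) is nonempty if and only if G is not contained in Cay(P_S) := conv(⋃_{i∈S} P_i × {e_i}) for any proper subset S ⊊ {1, …, m}. -/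
/-- A nonempty exposed face `G` of the Cayley polytope meets the interior Cayley slice
`ℝ^d × {λ}` if and only if `G` is not contained in any sub-Cayley polytope
`Cay(P_S) = conv (⋃ i ∈ S, P i × {e i})` for a proper subset `S ⊊ {1, …, m}`. -/
theorem cayley_face_meets_slice_iff (d m : ℕ) (hm : 1 ≤ m)
    (V : Fin m → Set (Fin d → ℝ)) (hV : ∀ i, (V i).Finite) (hVne : ∀ i, (V i).Nonempty)
    (lam : Fin m → ℝ) (hpos : ∀ i, 0 < lam i) (hsum : ∑ i : Fin m, lam i = 1)
    (G : Set ((Fin d → ℝ) × (Fin m → ℝ)))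
    (hG : IsExposed ℝ
      (convexHull ℝ
        (⋃ i : Fin m, (convexHull ℝ (V i)) ×ˢ ({Pi.single i 1} : Set (Fin m → ℝ))))
      G)
    (hGne : G.Nonempty) :
    (G ∩ (Set.univ ×ˢ ({lam} : Set (Fin m → ℝ)))).Nonempty ↔
      ∀ S : Finset (Fin m), S ≠ Finset.univ →
        ¬ G ⊆ convexHull ℝ
          (⋃ i ∈ S, (convexHull ℝ (V i)) ×ˢ ({Pi.single i 1} : Set (Fin m → ℝ))) := by
  classical
  set A : Set ((Fin d → ℝ) × (Fin m → ℝ)) :=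
    ⋃ i : Fin m, (convexHull ℝ (V i)) ×ˢ ({Pi.single i 1} : Set (Fin m → ℝ)) with hAdef
  set C : Set ((Fin d → ℝ) × (Fin m → ℝ)) := convexHull ℝ A with hCdef
  have hmemA : ∀ p : (Fin d → ℝ) × (Fin m → ℝ), p ∈ A →
      ∃ i, p.1 ∈ convexHull ℝ (V i) ∧ p.2 = Pi.single i 1 := by
    intro p hp
    rw [hAdef, Set.mem_iUnion] at hp
    obtain ⟨i, hi⟩ := hp
    exact ⟨i, hi.1, hi.2⟩
  obtain ⟨l, hl⟩ := hG hGne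
  have hGsub : G ⊆ C := by
    intro x hx; rw [hl] at hx; exact hx.1
  have hGc : Convex ℝ G := hG.convex (convex_convexHull ℝ A)
  -- every point of C has nonnegative second coordinates
  have hnn : ∀ p ∈ C, ∀ j : Fin m, 0 ≤ p.2 j := by
    intro p hp j
    have hsub : C ⊆ {x : (Fin d → ℝ) × (Fin m → ℝ) | 0 ≤ x.2 j} := by
      rw [hCdef]
      apply convexHull_min
      · intro x hx
        obtain ⟨i, _, h2⟩ := hmemA x hx
        simp only [Set.mem_setOf_eq, h2, Pi.single_apply]
        split <;> norm_num
      · intro x hx y hy a b ha hb hab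
        simp only [Set.mem_setOf_eq] at *
        have h : (a • x + b • y).2 j = a * x.2 j + b * y.2 j := by
          simp [Prod.smul_snd, smul_eq_mul]
        rw [h]
        exact add_nonneg (mul_nonneg ha hx) (mul_nonneg hb hy)
    exact hsub hp
  -- a point of C whose j-th second coordinate vanishes lies in the sub-Cayley polytope
  have hsupp : ∀ p ∈ C, ∀ j : Fin m, p.2 j = 0 →
      p ∈ convexHull ℝ (⋃ i ∈ Finset.univ.erase j,
        (convexHull ℝ (V i)) ×ˢ ({Pi.single i 1} : Set (Fin m → ℝ))) := by
    intro p hp j hpj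
    rw [hCdef, convexHull_eq] at hp
    obtain ⟨ι, t, w, z, hw0, hw1, hzA, hcm⟩ := hp
    have hz' : ∀ k ∈ t, ∃ i, (z k).1 ∈ convexHull ℝ (V i) ∧ (z k).2 = Pi.single i 1 :=
      fun k hk => hmemA _ (hzA k hk)
    choose idx hidx1 hidx2 using hz'
    have hp2 : p.2 j = ∑ k ∈ t, w k * (z k).2 j := by
      rw [← hcm, Finset.centerMass_eq_of_sum_1 _ _ hw1, Prod.snd_sum, Finset.sum_apply]
      simp [Prod.smul_snd, smul_eq_mul]
    have hterm0 : ∀ k ∈ t, w k * (z k).2 j = 0 := by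
      rw [hpj] at hp2
      refine (Finset.sum_eq_zero_iff_of_nonneg ?_).1 hp2.symm
      intro k hk
      refine mul_nonneg (hw0 k hk) ?_
      rw [hidx2 k hk, Pi.single_apply]
      split <;> norm_num
    have key : ∀ k ∈ t, w k ≠ 0 → z k ∈ ⋃ i ∈ Finset.univ.erase j,
        (convexHull ℝ (V i)) ×ˢ ({Pi.single i 1} : Set (Fin m → ℝ)) := by
      intro k hk hwk
      have hzz : (z k).2 j = 0 := by
        rcases mul_eq_zero.1 (hterm0 k hk) with h | h
        · exact absurd h hwk
        · exact h
      have hne : idx k hk ≠ j := by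
        intro h
        rw [hidx2 k hk, h, Pi.single_eq_same] at hzz
        exact one_ne_zero hzz
      rw [Set.mem_iUnion₂]
      refine ⟨idx k hk, Finset.mem_erase.2 ⟨hne, Finset.mem_univ _⟩, ?_⟩
      exact Set.mem_prod.2 ⟨hidx1 k hk, by simp [hidx2 k hk]⟩
    rw [← hcm, ← Finset.centerMass_filter_ne_zero]
    refine Finset.centerMass_mem_convexHull _ (fun k hk => hw0 k (Finset.mem_filter.1 hk).1)
      ?_ ?_
    · rw [Finset.sum_filter_ne_zero, hw1]; norm_num
    · intro k hk
      obtain ⟨hkt, hwk⟩ := Finset.mem_filter.1 hk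
      exact key k hkt hwk
  -- an exposed face absorbs the generators of any positive convex combination
  have habs : ∀ p ∈ G, ∀ (ι : Type) (t : Finset ι) (w : ι → ℝ)
      (z : ι → (Fin d → ℝ) × (Fin m → ℝ)), (∀ k ∈ t, 0 ≤ w k) → (∑ k ∈ t, w k) = 1 →
      (∀ k ∈ t, z k ∈ C) → t.centerMass w z = p → ∀ k ∈ t, w k ≠ 0 → z k ∈ G := by
    intro p hp ι t w z hw0 hw1 hzC hcm k hk hwk
    have hp' := hp
    rw [hl] at hp'
    obtain ⟨hpC, hpmax⟩ := hp'
    have hlp : l p = ∑ k ∈ t, w k * l (z k) := by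
      rw [← hcm, Finset.centerMass_eq_of_sum_1 _ _ hw1, map_sum]
      simp [smul_eq_mul]
    have hsum0 : ∑ k ∈ t, w k * (l p - l (z k)) = 0 := by
      simp only [mul_sub]
      rw [Finset.sum_sub_distrib, ← Finset.sum_mul, hw1, one_mul, ← hlp, sub_self]
    have hterm : ∀ k ∈ t, w k * (l p - l (z k)) = 0 := by
      refine (Finset.sum_eq_zero_iff_of_nonneg ?_).1 hsum0
      intro k hk
      exact mul_nonneg (hw0 k hk) (sub_nonneg.2 (hpmax _ (hzC k hk)))
    have hlz : l (z k) = l p := by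
      rcases mul_eq_zero.1 (hterm k hk) with h | h
      · exact absurd h hwk
      · linarith [sub_eq_zero.1 h]
    rw [hl]
    exact ⟨hzC k hk, fun y hy => hlz ▸ hpmax y hy⟩
  constructor
  · rintro ⟨p, hpG, hpslice⟩ S hS hsub
    obtain ⟨j, hjS⟩ : ∃ j, j ∉ S := by
      by_contra h
      push_neg at h
      exact hS (Finset.eq_univ_iff_forall.2 h)
    have hp2 : p.2 = lam := by
      have := hpslice.2
      simpa using this
    have hpj0 : p.2 j = 0 := by
      have hmem := hsub hpG
      have hsub2 : convexHull ℝ (⋃ i ∈ S,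
          (convexHull ℝ (V i)) ×ˢ ({Pi.single i 1} : Set (Fin m → ℝ)))
          ⊆ {x : (Fin d → ℝ) × (Fin m → ℝ) | x.2 j = 0} := by
        apply convexHull_min
        · intro x hx
          rw [Set.mem_iUnion₂] at hx
          obtain ⟨i, hiS, hx⟩ := hx
          have hx2 : x.2 = Pi.single i 1 := hx.2
          have hij : j ≠ i := fun h => hjS (h ▸ hiS)
          simp [Set.mem_setOf_eq, hx2, Pi.single_eq_of_ne hij]
        · intro x hx y hy a b ha hb hab
          simp only [Set.mem_setOf_eq] at *
          have h : (a • x + b • y).2 j = a * x.2 j + b * y.2 j := by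
            simp [Prod.smul_snd, smul_eq_mul]
          rw [h, hx, hy]; ring
      exact hsub2 hmem
    rw [hp2] at hpj0
    exact (hpos j).ne' hpj0
  · intro hnotsub
    -- for each j, a point of G with positive j-th coordinate
    have hstep1 : ∀ j : Fin m, ∃ p, p ∈ G ∧ 0 < p.2 j := by
      intro j
      have hS : (Finset.univ.erase j) ≠ Finset.univ := by
        intro h
        have hj : j ∉ Finset.univ.erase j := Finset.notMem_erase j _
        rw [h] at hj
        exact hj (Finset.mem_univ j)
      obtain ⟨p, hpG, hpn⟩ := Set.not_subset.1 (hnotsub _ hS)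
      refine ⟨p, hpG, ?_⟩
      have h0 : p.2 j ≠ 0 := fun h => hpn (hsupp p (hGsub hpG) j h)
      exact lt_of_le_of_ne (hnn p (hGsub hpG) j) (Ne.symm h0)
    choose q hqG hqpos using hstep1
    have hm0 : (m : ℝ) ≠ 0 := by positivity
    -- average them: a point of G with all second coordinates positive
    set r : (Fin d → ℝ) × (Fin m → ℝ) := ∑ j : Fin m, (m : ℝ)⁻¹ • q j with hrdef
    have hrG : r ∈ G := by
      refine hGc.sum_mem (fun i _ => by positivity) ?_ (fun i _ => hqG i)
      rw [Finset.sum_const, Finset.card_univ, Fintype.card_fin, nsmul_eq_mul,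
        mul_inv_cancel₀ hm0]
    have hr2 : ∀ j, 0 < r.2 j := by
      intro j
      have h : r.2 j = ∑ i : Fin m, (m : ℝ)⁻¹ * (q i).2 j := by
        rw [hrdef, Prod.snd_sum, Finset.sum_apply]
        simp [Prod.smul_snd, smul_eq_mul]
      rw [h]
      refine Finset.sum_pos' (fun i _ => mul_nonneg (by positivity)
        (hnn _ (hGsub (hqG i)) j)) ?_
      exact ⟨j, Finset.mem_univ j, mul_pos (by positivity) (hqpos j)⟩
    -- each vertex fiber contributes a point of G of the form (u, e_j)
    have hstep2 : ∀ j : Fin m, ∃ u, ((u, Pi.single j 1) : (Fin d → ℝ) × (Fin m → ℝ)) ∈ G := by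
      intro j
      have hrC : r ∈ C := hGsub hrG
      have hAC : A ⊆ C := subset_convexHull ℝ A
      rw [hCdef, convexHull_eq] at hrC
      obtain ⟨ι, t, w, z, hw0, hw1, hzA, hcm⟩ := hrC
      have hr2' : r.2 j = ∑ k ∈ t, w k * (z k).2 j := by
        rw [← hcm, Finset.centerMass_eq_of_sum_1 _ _ hw1, Prod.snd_sum, Finset.sum_apply]
        simp [Prod.smul_snd, smul_eq_mul]
      obtain ⟨k, hk, hne⟩ := Finset.exists_ne_zero_of_sum_ne_zero
        (by rw [← hr2']; exact (hr2 j).ne')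
      have hwk : w k ≠ 0 := fun h => hne (by rw [h, zero_mul])
      obtain ⟨i, hi1, hi2⟩ := hmemA _ (hzA k hk)
      have hij : i = j := by
        by_contra h
        apply hne
        rw [hi2, Pi.single_eq_of_ne (Ne.symm h), mul_zero]
      have hzG : z k ∈ G :=
        habs r hrG ι t w z hw0 hw1 (fun k hk => hAC (hzA k hk)) hcm k hk hwk
      refine ⟨(z k).1, ?_⟩
      have heq : ((z k).1, Pi.single j 1) = z k := by
        rw [← hij, ← hi2]
      rwa [heq]
    choose u hu using hstep2
    refine ⟨∑ j : Fin m, lam j • ((u j, Pi.single j 1) : (Fin d → ℝ) × (Fin m → ℝ)), ?_, ?_⟩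
    · exact hGc.sum_mem (fun i _ => (hpos i).le) hsum (fun i _ => hu i)
    · refine Set.mem_prod.2 ⟨Set.mem_univ _, ?_⟩
      rw [Set.mem_singleton_iff, Prod.snd_sum]
      funext k
      rw [Finset.sum_apply]
      simp [Prod.smul_snd, Pi.single_apply, mul_ite]
end

section
/- Let m ≥ 1, let P_1, …, P_m be nonempty polytopes in ℝ^d (convex hulls of finite sets), and let i be a natural number. Then the number of nonempty exposed faces G of the Cayley polytope Cay(P_1, …, P_m) = conv(⋃_{j=1}^m P_j × {e_j}) ⊆ ℝ^d × ℝ^m such that dim(affine span of G) = i + m − 1 and G is not contained in Cay(P_S) := conv(⋃_{j∈S} P_j × {e_j}) for any proper subset S ⊊ {1, …, m}, equals the number of nonempty exposed faces F of the Minkowski sum P_1 + P_2 + ⋯ + P_m with dim(affine span of F) = i. -/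
open Pointwise

/-- The Cayley polytope `Cay(P 1, …, P m) = conv (⋃ i, P i × {e i}) ⊆ ℝ^d × ℝ^m`. -/
def cayleyPolytope (d m : ℕ) (V : Fin m → Set (Fin d → ℝ)) :
    Set ((Fin d → ℝ) × (Fin m → ℝ)) :=
  convexHull ℝ (⋃ i : Fin m, (convexHull ℝ (V i)) ×ˢ ({Pi.single i 1} : Set (Fin m → ℝ)))

/-- The sub-Cayley polytope `Cay(P_S) = conv (⋃ i ∈ S, P i × {e i})`. -/
def subCayleyPolytope (d m : ℕ) (V : Fin m → Set (Fin d → ℝ)) (S : Finset (Fin m)) :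
    Set ((Fin d → ℝ) × (Fin m → ℝ)) :=
  convexHull ℝ (⋃ i ∈ S, (convexHull ℝ (V i)) ×ˢ ({Pi.single i 1} : Set (Fin m → ℝ)))


open Set

section Generic

variable {W : Type*} [NormedAddCommGroup W] [NormedSpace ℝ W]


/-- The exposed face of `A` in direction `l`. -/
def expFace (l : W →L[ℝ] ℝ) (A : Set W) : Set W := { x ∈ A | ∀ y ∈ A, l y ≤ l x }

lemma expFace_add (l : W →L[ℝ] ℝ) (A B : Set W) :
    expFace l (A + B) = expFace l A + expFace l B := by
  ext x
  constructor
  · rintro ⟨hx, hmax⟩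
    obtain ⟨a, ha, b, hb, rfl⟩ := Set.mem_add.1 hx
    refine Set.add_mem_add ⟨ha, fun y hy => ?_⟩ ⟨hb, fun y hy => ?_⟩
    · have := hmax (y + b) (Set.add_mem_add hy hb)
      simpa [map_add] using this
    · have := hmax (a + y) (Set.add_mem_add ha hy)
      simpa [map_add] using this
  · rintro ⟨a, ⟨ha, hamax⟩, b, ⟨hb, hbmax⟩, rfl⟩
    refine ⟨Set.add_mem_add ha hb, ?_⟩
    rintro y ⟨a', ha', b', hb', rfl⟩
    have := add_le_add (hamax a' ha') (hbmax b' hb')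
    simpa [map_add] using this

lemma expFace_sum {ι : Type*} (l : W →L[ℝ] ℝ) (s : Finset ι) (A : ι → Set W) :
    expFace l (∑ j ∈ s, A j) = ∑ j ∈ s, expFace l (A j) := by
  classical
  induction s using Finset.cons_induction with
  | empty =>
    simp only [Finset.sum_empty]
    ext x
    simp only [expFace, Set.mem_setOf_eq]
    constructor
    · rintro ⟨hx, _⟩; exact hx
    · rintro hx
      refine ⟨hx, fun y hy => ?_⟩
      simp only [Set.mem_zero] at hx hy
      subst hx; subst hy; exact le_refl _
  | cons a s ha ih =>
    rw [Finset.sum_cons, Finset.sum_cons, expFace_add, ih]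

lemma mem_expFace_of_sum_mem {ι : Type*} [DecidableEq ι] (l : W →L[ℝ] ℝ) (s : Finset ι)
    (A : ι → Set W) (y : ι → W) (hy : ∀ j ∈ s, y j ∈ A j)
    (hsum : ∑ j ∈ s, y j ∈ expFace l (∑ j ∈ s, A j)) {j : ι} (hj : j ∈ s) :
    y j ∈ expFace l (A j) := by
  refine ⟨hy j hj, fun a haA => ?_⟩
  have hmem : ∑ k ∈ s, Function.update y j a k ∈ ∑ k ∈ s, A k := by
    refine Set.finset_sum_mem_finset_sum s A _ fun k hk => ?_
    rcases eq_or_ne k j with rfl | hkj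
    · simpa using haA
    · rw [Function.update_of_ne hkj]; exact hy k hk
  have h2 := hsum.2 _ hmem
  rw [Finset.sum_update_of_mem hj] at h2
  have h3 : ∑ k ∈ s, y k = y j + ∑ k ∈ s \ {j}, y k := by
    rw [Finset.sdiff_singleton_eq_erase, Finset.add_sum_erase _ _ hj]
  rw [h3] at h2
  simpa [map_add] using h2

lemma expFace_eq_level {l : W →L[ℝ] ℝ} {A : Set W} {M : ℝ}
    (hub : ∀ x ∈ A, l x ≤ M) (hM : ∃ x ∈ A, l x = M) :
    expFace l A = { x ∈ A | l x = M } := by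
  obtain ⟨x₀, hx₀, hlx₀⟩ := hM
  ext x
  constructor
  · rintro ⟨hx, hmax⟩
    exact ⟨hx, le_antisymm (hub x hx) (hlx₀ ▸ hmax x₀ hx₀)⟩
  · rintro ⟨hx, hlx⟩
    exact ⟨hx, fun y hy => hlx ▸ hub y hy⟩

lemma convex_expFace {l : W →L[ℝ] ℝ} {A : Set W} (hA : Convex ℝ A) :
    Convex ℝ (expFace l A) := by
  rintro x ⟨hx, hxm⟩ y ⟨hy, hym⟩ a b ha hb hab
  refine ⟨hA hx hy ha hb hab, fun z hz => ?_⟩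
  have : l z = a * l z + b * l z := by rw [← add_mul, hab, one_mul]
  rw [this]
  simp only [map_add, map_smul, smul_eq_mul]
  exact add_le_add (mul_le_mul_of_nonneg_left (hxm z hz) ha)
    (mul_le_mul_of_nonneg_left (hym z hz) hb)

lemma expFace_nonempty {l : W →L[ℝ] ℝ} {A : Set W} (hA : IsCompact A) (hne : A.Nonempty) :
    (expFace l A).Nonempty := by
  obtain ⟨x, hx, hmax⟩ := hA.exists_isMaxOn hne l.continuous.continuousOn
  exact ⟨x, hx, hmax⟩

lemma level_convex (l : W →L[ℝ] ℝ) (M : ℝ) : Convex ℝ { x : W | l x = M } :=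
  convex_hyperplane (IsLinearMap.mk l.map_add l.map_smul) M

lemma le_on_hull {l : W →L[ℝ] ℝ} {M : ℝ} {s : Set W} (hub : ∀ x ∈ s, l x ≤ M) :
    ∀ x ∈ convexHull ℝ s, l x ≤ M := by
  intro x hx
  have : convexHull ℝ s ⊆ { y : W | l y ≤ M } :=
    convexHull_min hub (convex_halfSpace_le (IsLinearMap.mk l.map_add l.map_smul) M)
  exact this hx

/-- The exposed face of the convex hull of a finite union, when the max `M` is attained,
is the convex hull of the union of the level sets. -/
lemma expFace_convexHull_iUnion {ι : Type*} [Fintype ι] (C : ι → Set W) (l : W →L[ℝ] ℝ) (M : ℝ)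
    (hub : ∀ j, ∀ x ∈ C j, l x ≤ M)
    (hM : ∃ x ∈ convexHull ℝ (⋃ j, C j), l x = M) :
    expFace l (convexHull ℝ (⋃ j, C j)) =
      convexHull ℝ (⋃ j, { x ∈ C j | l x = M }) := by
  classical
  have hub' : ∀ x ∈ (⋃ j, C j), l x ≤ M := by
    rintro x hx
    obtain ⟨j, hj⟩ := Set.mem_iUnion.1 hx
    exact hub j x hj
  have hhull := le_on_hull hub'
  apply Set.Subset.antisymm
  · rintro x ⟨hx, hmax⟩
    obtain ⟨x₀, hx₀, hlx₀⟩ := hM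
    have hlx : l x = M := le_antisymm (hhull x hx) (hlx₀ ▸ hmax x₀ hx₀)
    rw [convexHull_eq] at hx
    obtain ⟨ι', t, w, z, hw₀, hw₁, hz, hcm⟩ := hx
    -- positive weight points attain the max
    have hsum : ∑ i ∈ t, w i * (M - l (z i)) = 0 := by
      have : l x = ∑ i ∈ t, w i * l (z i) := by
        rw [← hcm, Finset.centerMass_eq_of_sum_1 _ _ hw₁, map_sum]
        simp [map_smul]
      simp only [mul_sub, Finset.sum_sub_distrib, ← this, ← Finset.sum_mul, hw₁, one_mul, hlx]
      ring
    have hterm : ∀ i ∈ t, w i * (M - l (z i)) = 0 := by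
      refine (Finset.sum_eq_zero_iff_of_nonneg fun i hi => ?_).1 hsum
      exact mul_nonneg (hw₀ i hi) (sub_nonneg.2 (hub' _ (hz i hi)))
    -- restrict to positive weights
    rw [← hcm, ← Finset.centerMass_filter_ne_zero]
    apply Finset.centerMass_mem_convexHull
    · intro i hi
      exact hw₀ i (Finset.mem_filter.1 hi).1
    · rw [Finset.sum_filter_ne_zero, hw₁]; exact one_pos
    · intro i hi
      obtain ⟨hit, hwi⟩ := Finset.mem_filter.1 hi
      obtain ⟨j, hj⟩ := Set.mem_iUnion.1 (hz i hit)
      have : l (z i) = M := by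
        have := hterm i hit
        rcases mul_eq_zero.1 this with h | h
        · exact absurd h hwi
        · linarith [sub_eq_zero.1 h]
      exact Set.mem_iUnion.2 ⟨j, hj, this⟩
  · have hsub : (⋃ j, { x ∈ C j | l x = M }) ⊆
        convexHull ℝ (⋃ j, C j) ∩ { x : W | l x = M } := by
      rintro x hx
      obtain ⟨j, hj, hlx⟩ := Set.mem_iUnion.1 hx
      exact ⟨subset_convexHull ℝ _ (Set.mem_iUnion.2 ⟨j, hj⟩), hlx⟩
    have := convexHull_min hsub ((convex_convexHull ℝ _).inter (level_convex l M))
    rintro x hx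
    obtain ⟨hx₁, hx₂⟩ := this hx
    exact ⟨hx₁, fun y hy => hx₂ ▸ hhull y hy⟩

/-- Slicing the Cayley-type hull at the vertex `e k` recovers `D k`. -/
lemma cayley_slice {m : ℕ} (D : Fin m → Set W) (hconv : ∀ j, Convex ℝ (D j)) (k : Fin m) :
    { x : W | (x, Pi.single k 1) ∈
        convexHull ℝ (⋃ j, (D j) ×ˢ ({Pi.single j 1} : Set (Fin m → ℝ))) } = D k := by
  classical
  apply Set.Subset.antisymm
  · rintro x hx
    simp only [Set.mem_setOf_eq, convexHull_eq] at hx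
    obtain ⟨ι', t, w, z, hw₀, hw₁, hz, hcm⟩ := hx
    rw [Finset.centerMass_eq_of_sum_1 _ _ hw₁] at hcm
    -- facts about points of the union
    have hkey : ∀ i ∈ t, (z i).2 k ≤ 1 ∧ ((z i).2 k = 1 → (z i).1 ∈ D k) := by
      intro i hi
      obtain ⟨j, hj⟩ := Set.mem_iUnion.1 (hz i hi)
      obtain ⟨h1, h2⟩ := hj
      simp only [Set.mem_singleton_iff] at h2
      rw [h2, Pi.single_apply]
      rcases eq_or_ne k j with rfl | hkj
      · simp only [if_pos rfl]
        exact ⟨le_refl 1, fun _ => h1⟩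
      · simp only [if_neg hkj]
        exact ⟨zero_le_one, fun h => absurd h.symm one_ne_zero⟩
    -- second coordinates
    have h2 : ∑ i ∈ t, w i * (z i).2 k = 1 := by
      have := congrArg (fun p : W × (Fin m → ℝ) => p.2 k) hcm
      simpa [Prod.snd_sum, Prod.smul_snd, Finset.sum_apply, Pi.smul_apply, smul_eq_mul,
        Pi.single_eq_same] using this
    have hzero : ∀ i ∈ t, w i * (1 - (z i).2 k) = 0 := by
      refine (Finset.sum_eq_zero_iff_of_nonneg fun i hi =>
        mul_nonneg (hw₀ i hi) (sub_nonneg.2 (hkey i hi).1)).1 ?_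
      simp only [mul_sub, Finset.sum_sub_distrib, mul_one, hw₁, h2, sub_self]
    -- first coordinates
    have h1 : ∑ i ∈ t, w i • (z i).1 = x := by
      have := congrArg Prod.fst hcm
      simpa [Prod.fst_sum, Prod.smul_fst] using this
    have hwf : ∑ i ∈ {i ∈ t | w i ≠ 0}, w i = 1 := by
      rw [Finset.sum_filter_ne_zero, hw₁]
    have hx' : x ∈ convexHull ℝ (D k) := by
      rw [← h1]
      have : ∑ i ∈ t, w i • (z i).1 = ∑ i ∈ {i ∈ t | w i ≠ 0}, w i • (z i).1 := by
        refine (Finset.sum_filter_of_ne fun i hi h => ?_).symm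
        intro hw; rw [hw] at h; simp at h
      rw [this, ← Finset.centerMass_eq_of_sum_1 _ _ hwf]
      refine Finset.centerMass_mem_convexHull _ (fun i hi => hw₀ i (Finset.mem_filter.1 hi).1)
        (by rw [hwf]; exact one_pos) ?_
      intro i hi
      obtain ⟨hit, hwi⟩ := Finset.mem_filter.1 hi
      refine (hkey i hit).2 ?_
      have := hzero i hit
      rcases mul_eq_zero.1 this with h | h
      · exact absurd h hwi
      · linarith [sub_eq_zero.1 h]
    rwa [(hconv k).convexHull_eq] at hx'
  · intro x hx
    exact subset_convexHull ℝ _ (Set.mem_iUnion.2 ⟨k, Set.mk_mem_prod hx rfl⟩)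

/-- Uniqueness of the Minkowski decomposition of the face `expFace f (∑ P j)`. -/
lemma decomp_eq_expFace {m : ℕ} (f : W →L[ℝ] ℝ) (P : Fin m → Set W)
    (hne : ∀ k, (expFace f (P k)).Nonempty) (j : Fin m) :
    { x ∈ P j | ∃ y : Fin m → W, (∀ k, y k ∈ P k) ∧ y j = x ∧
        ∑ k, y k ∈ expFace f (∑ k, P k) } = expFace f (P j) := by
  classical
  apply Set.Subset.antisymm
  · rintro x ⟨hxP, y, hy, hyj, hsum⟩
    have := mem_expFace_of_sum_mem f Finset.univ P y (fun k _ => hy k) hsum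
      (Finset.mem_univ j)
    rwa [hyj] at this
  · rintro x hx
    refine ⟨hx.1, Function.update (fun k => (hne k).some) j x, fun k => ?_, ?_, ?_⟩
    · rcases eq_or_ne k j with rfl | hkj
      · rw [Function.update_self]; exact hx.1
      · rw [Function.update_of_ne hkj]; exact ((hne k).some_mem).1
    · exact Function.update_self _ _ _
    · rw [expFace_sum]
      refine Set.finset_sum_mem_finset_sum _ _ _ fun k _ => ?_
      rcases eq_or_ne k j with rfl | hkj
      · rw [Function.update_self]; exact hx
      · rw [Function.update_of_ne hkj]; exact (hne k).some_mem

lemma vectorSpan_add {A B : Set W} (hA : A.Nonempty) (hB : B.Nonempty) :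
    vectorSpan ℝ (A + B) = vectorSpan ℝ A ⊔ vectorSpan ℝ B := by
  apply le_antisymm
  · rw [vectorSpan_def, Submodule.span_le]
    rintro v hv
    rw [Set.mem_vsub] at hv
    obtain ⟨p, hp, q, hq, rfl⟩ := hv
    obtain ⟨a, ha, b, hb, rfl⟩ := Set.mem_add.1 hp
    obtain ⟨a', ha', b', hb', rfl⟩ := Set.mem_add.1 hq
    have : (a + b) -ᵥ (a' + b') = (a -ᵥ a') + (b -ᵥ b') := by
      simp only [vsub_eq_sub]; abel
    rw [this]
    exact Submodule.add_mem_sup (vsub_mem_vectorSpan ℝ ha ha') (vsub_mem_vectorSpan ℝ hb hb')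
  · obtain ⟨b₀, hb₀⟩ := hB
    obtain ⟨a₀, ha₀⟩ := hA
    refine sup_le ?_ ?_ <;> rw [vectorSpan_def, Submodule.span_le] <;> rintro v hv <;>
      rw [Set.mem_vsub] at hv
    · obtain ⟨a, ha, a', ha', rfl⟩ := hv
      have : a -ᵥ a' = (a + b₀) -ᵥ (a' + b₀) := by simp only [vsub_eq_sub]; abel
      rw [this]
      exact vsub_mem_vectorSpan ℝ (Set.add_mem_add ha hb₀) (Set.add_mem_add ha' hb₀)
    · obtain ⟨b, hb, b', hb', rfl⟩ := hv
      have : b -ᵥ b' = (a₀ + b) -ᵥ (a₀ + b') := by simp only [vsub_eq_sub]; abel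
      rw [this]
      exact vsub_mem_vectorSpan ℝ (Set.add_mem_add ha₀ hb) (Set.add_mem_add ha₀ hb')

lemma sum_sets_nonempty {ι : Type*} (s : Finset ι) (A : ι → Set W)
    (hne : ∀ j ∈ s, (A j).Nonempty) : (∑ j ∈ s, A j).Nonempty := by
  classical
  choose g hg using hne
  refine ⟨∑ j ∈ s, if h : j ∈ s then g j h else 0, ?_⟩
  refine Set.finset_sum_mem_finset_sum s A _ fun j hj => ?_
  rw [dif_pos hj]
  exact hg j hj

lemma vectorSpan_sum {ι : Type*} (s : Finset ι) (A : ι → Set W)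
    (hne : ∀ j ∈ s, (A j).Nonempty) :
    vectorSpan ℝ (∑ j ∈ s, A j) = ⨆ j ∈ s, vectorSpan ℝ (A j) := by
  classical
  induction s using Finset.cons_induction with
  | empty =>
    simp only [Finset.sum_empty, Finset.notMem_empty, iSup_false, iSup_bot]
    have : (0 : Set W) = ({0} : Set W) := rfl
    rw [this, vectorSpan_singleton]
  | cons a s ha ih =>
    rw [Finset.sum_cons, vectorSpan_add (hne a (Finset.mem_cons_self a s))
      (sum_sets_nonempty s A fun j hj => hne j (Finset.mem_cons_of_mem hj)),
      ih fun j hj => hne j (Finset.mem_cons_of_mem hj)]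
    rw [Finset.cons_eq_insert, Finset.iSup_insert]



lemma single_sub_linearIndependent {m : ℕ} (j₀ : Fin m) :
    LinearIndependent ℝ (fun j : {j : Fin m // j ≠ j₀} =>
      (Pi.single (j : Fin m) 1 - Pi.single j₀ 1 : Fin m → ℝ)) := by
  rw [Fintype.linearIndependent_iff]
  intro g hg j
  have h := congrFun hg (j : Fin m)
  simp only [Finset.sum_apply, Pi.sub_apply, Pi.smul_apply, smul_eq_mul,
    Pi.zero_apply] at h
  rw [Finset.sum_eq_single j] at h
  · rw [Pi.single_eq_same, Pi.single_apply, if_neg j.2] at h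
    simpa using h
  · intro k _ hkj
    rw [Pi.single_apply, if_neg (fun hh => hkj (Subtype.ext hh.symm)),
      Pi.single_apply, if_neg j.2]
    ring
  · intro hj
    exact absurd (Finset.mem_univ j) hj

lemma dim_cayley {m : ℕ} [FiniteDimensional ℝ W] (hm : 1 ≤ m) (G : Fin m → Set W)
    (hne : ∀ j, (G j).Nonempty) :
    Module.finrank ℝ (vectorSpan ℝ (⋃ j, (G j) ×ˢ ({Pi.single j 1} : Set (Fin m → ℝ)))) =
      Module.finrank ℝ (vectorSpan ℝ (∑ j, G j)) + (m - 1) := by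
  classical
  set Y := (Fin m → ℝ)
  have hm0 : (0 : ℕ) < m := hm
  set j₀ : Fin m := ⟨0, hm0⟩ with hj₀
  choose a ha using hne
  set e : Fin m → Y := fun j => Pi.single j 1 with he
  set v : Fin m → W × Y := fun j => (a j - a j₀, e j - e j₀) with hv
  set D : Submodule ℝ W := vectorSpan ℝ (∑ j, G j) with hD
  set U : Set (W × Y) := ⋃ j, (G j) ×ˢ ({e j} : Set Y) with hU
  set c : W × Y := (a j₀, e j₀) with hc
  have hcU : c ∈ U := Set.mem_iUnion.2 ⟨j₀, Set.mk_mem_prod (ha j₀) rfl⟩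
  have hbmem : ∑ k, a k ∈ ∑ k, G k :=
    Set.finset_sum_mem_finset_sum _ _ _ fun k _ => ha k
  -- differences within G j lie in D
  have hsubD : ∀ j, ∀ x ∈ G j, x - a j ∈ D := by
    intro j x hx
    have h1 : ∑ k, Function.update a j x k ∈ ∑ k, G k := by
      refine Set.finset_sum_mem_finset_sum _ _ _ fun k _ => ?_
      rcases eq_or_ne k j with rfl | hkj
      · rw [Function.update_self]; exact hx
      · rw [Function.update_of_ne hkj]; exact ha k
    have h2 : (∑ k, Function.update a j x k) - (∑ k, a k) = x - a j := by
      rw [Finset.sum_update_of_mem (Finset.mem_univ j), Finset.sdiff_singleton_eq_erase,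
        ← Finset.add_sum_erase _ a (Finset.mem_univ j)]
      abel
    have := vsub_mem_vectorSpan ℝ h1 hbmem
    rwa [vsub_eq_sub, h2] at this
  -- Step 1 : the vector span of U
  have hstep1 : vectorSpan ℝ U =
      D.map (LinearMap.inl ℝ W Y) ⊔ Submodule.span ℝ (Set.range v) := by
    rw [vectorSpan_eq_span_vsub_set_right ℝ hcU]
    apply le_antisymm
    · rw [Submodule.span_le]
      rintro u ⟨p, hp, rfl⟩
      obtain ⟨j, hj⟩ := Set.mem_iUnion.1 hp
      obtain ⟨hp1, hp2⟩ := hj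
      simp only [Set.mem_singleton_iff] at hp2
      have hdecomp : p -ᵥ c = (LinearMap.inl ℝ W Y) (p.1 - a j) + v j := by
        have : p = (p.1, e j) := by rw [← hp2]
        rw [this]
        simp only [vsub_eq_sub, Prod.mk_sub_mk, LinearMap.inl_apply, hv, Prod.mk_add_mk, hc]
        simp only [Prod.mk.injEq]
        constructor <;> abel
      show p -ᵥ c ∈ _
      rw [hdecomp]
      exact Submodule.add_mem_sup (Submodule.mem_map_of_mem (hsubD j p.1 hp1))
        (Submodule.subset_span (Set.mem_range_self j))
    · refine sup_le ?_ ?_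
      · have hDspan : D = Submodule.span ℝ ((· -ᵥ (∑ k, a k)) '' (∑ k, G k)) :=
          vectorSpan_eq_span_vsub_set_right ℝ hbmem
        rw [hDspan, Submodule.map_span, Submodule.span_le]
        rintro u ⟨u', ⟨y, hy, rfl⟩, rfl⟩
        rw [Set.mem_fintype_sum] at hy
        obtain ⟨g, hg, rfl⟩ := hy
        have hkey : (LinearMap.inl ℝ W Y) ((∑ k, g k) -ᵥ (∑ k, a k)) =
            ∑ k, ((((g k, e k) : W × Y) -ᵥ c) - (((a k, e k) : W × Y) -ᵥ c)) := by
          simp only [vsub_eq_sub, Prod.mk_sub_mk, LinearMap.inl_apply, hc]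
          rw [Prod.ext_iff]
          constructor
          · simp only [Prod.fst_sum, Prod.mk_sub_mk, Finset.sum_sub_distrib]
            abel
          · simp only [Prod.snd_sum, Prod.mk_sub_mk, Finset.sum_sub_distrib]
            abel
        show (LinearMap.inl ℝ W Y) ((fun x => x -ᵥ ∑ k, a k) (∑ k, g k)) ∈ _
        rw [hkey]
        refine Submodule.sum_mem _ fun k _ => Submodule.sub_mem _ ?_ ?_
        · exact Submodule.subset_span ⟨(g k, e k), Set.mem_iUnion.2
            ⟨k, Set.mk_mem_prod (hg k) rfl⟩, rfl⟩
        · exact Submodule.subset_span ⟨(a k, e k), Set.mem_iUnion.2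
            ⟨k, Set.mk_mem_prod (ha k) rfl⟩, rfl⟩
      · rw [Submodule.span_le]
        rintro u ⟨j, rfl⟩
        refine Submodule.subset_span ⟨(a j, e j), Set.mem_iUnion.2
          ⟨j, Set.mk_mem_prod (ha j) rfl⟩, ?_⟩
        simp only [vsub_eq_sub, Prod.mk_sub_mk, hv, hc]
  -- Step 2 : rank computation
  rw [hstep1]
  set K := D.map (LinearMap.inl ℝ W Y) with hK
  set w : {j : Fin m // j ≠ j₀} → W × Y := fun j => v j with hw
  set u : {j : Fin m // j ≠ j₀} → Y := fun j => e j - e j₀ with hu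
  have hindep_u : LinearIndependent ℝ u := by
    have : u = fun j : {j : Fin m // j ≠ j₀} =>
        (Pi.single (j : Fin m) 1 - Pi.single j₀ 1 : Fin m → ℝ) := by
      funext j; simp [hu, he]
    rw [this]
    exact single_sub_linearIndependent j₀
  have hindep_w : LinearIndependent ℝ w := by
    refine LinearIndependent.of_comp (LinearMap.snd ℝ W Y) ?_
    have : (LinearMap.snd ℝ W Y) ∘ w = u := by
      funext j
      simp [hw, hu, hv]
    rwa [this]
  have hspan_vw : Submodule.span ℝ (Set.range v) = Submodule.span ℝ (Set.range w) := by
    apply le_antisymm <;> rw [Submodule.span_le]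
    · rintro x ⟨j, rfl⟩
      by_cases hj : j = j₀
      · have : v j = 0 := by rw [hj]; simp [hv]
        rw [this]; exact Submodule.zero_mem _
      · exact Submodule.subset_span ⟨⟨j, hj⟩, rfl⟩
    · rintro x ⟨j, rfl⟩
      exact Submodule.subset_span ⟨j, rfl⟩
  have hdisj : K ⊓ Submodule.span ℝ (Set.range v) = ⊥ := by
    rw [hspan_vw, Submodule.eq_bot_iff]
    intro z hz
    obtain ⟨hzK, hzV⟩ := Submodule.mem_inf.1 hz
    rw [Submodule.mem_span_range_iff_exists_fun] at hzV
    obtain ⟨g, hg⟩ := hzV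
    have hz2 : z.2 = 0 := by
      obtain ⟨d, _, hd⟩ := Submodule.mem_map.1 hzK
      rw [← hd]
      rfl
    have hsum : ∑ j, g j • u j = 0 := by
      have h2 := congrArg Prod.snd hg
      rw [Prod.snd_sum] at h2
      simp only [Prod.smul_snd] at h2
      rw [hz2] at h2
      exact h2
    have hg0 : ∀ j, g j = 0 := Fintype.linearIndependent_iff.1 hindep_u g hsum
    rw [← hg]
    simp [hg0]
  have hrankK : Module.finrank ℝ K = Module.finrank ℝ D :=
    (Submodule.equivMapOfInjective (LinearMap.inl ℝ W Y) LinearMap.inl_injective D).finrank_eq.symm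
  have hrankV : Module.finrank ℝ (Submodule.span ℝ (Set.range v)) = m - 1 := by
    rw [hspan_vw, finrank_span_eq_card hindep_w]
    rw [Fintype.card_subtype_compl, Fintype.card_subtype_eq, Fintype.card_fin]
  have := Submodule.finrank_sup_add_finrank_inf_eq K (Submodule.span ℝ (Set.range v))
  rw [hdisj, finrank_bot, add_zero] at this
  rw [this, hrankK, hrankV]

lemma vectorSpan_convexHull (s : Set W) :
    vectorSpan ℝ (convexHull ℝ s) = vectorSpan ℝ s := by
  rw [← direction_affineSpan, affineSpan_convexHull, direction_affineSpan]

end Generic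

section Concrete
variable {d m : ℕ} {V : Fin m → Set (Fin d → ℝ)}

/-- Any qualifying exposed face of the Cayley polytope is the Cayley polytope
of exposed faces of the summands, all in a common direction `f`. -/
lemma cayley_face_rep
    {G : Set ((Fin d → ℝ) × (Fin m → ℝ))}
    (hGexp : IsExposed ℝ (cayleyPolytope d m V) G) (hGne : G.Nonempty)
    (hGS : ∀ S : Finset (Fin m), S ≠ Finset.univ → ¬ G ⊆ subCayleyPolytope d m V S) :
    ∃ f : (Fin d → ℝ) →L[ℝ] ℝ,
      (∀ j, (expFace f (convexHull ℝ (V j))).Nonempty) ∧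
      G = convexHull ℝ (⋃ j, (expFace f (convexHull ℝ (V j))) ×ˢ
        ({Pi.single j 1} : Set (Fin m → ℝ))) := by
  classical
  obtain ⟨l, hl⟩ := hGexp hGne
  obtain ⟨x₀, hx₀⟩ := hGne
  set P : Fin m → Set (Fin d → ℝ) := fun j => convexHull ℝ (V j) with hP
  set C : Fin m → Set ((Fin d → ℝ) × (Fin m → ℝ)) := fun j => (P j) ×ˢ ({Pi.single j 1} : Set (Fin m → ℝ)) with hC
  set M : ℝ := l x₀ with hM
  have hx₀' : x₀ ∈ cayleyPolytope d m V ∧ ∀ y ∈ cayleyPolytope d m V, l y ≤ l x₀ := by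
    rw [hl] at hx₀; exact hx₀
  have hCay : cayleyPolytope d m V = convexHull ℝ (⋃ j, C j) := rfl
  have hub : ∀ j, ∀ p ∈ C j, l p ≤ M :=
    fun j p hp => hx₀'.2 p (subset_convexHull ℝ _ (Set.mem_iUnion.2 ⟨j, hp⟩))
  have hface : G = convexHull ℝ (⋃ j, { p ∈ C j | l p = M }) := by
    rw [hl]
    exact expFace_convexHull_iUnion C l M hub ⟨x₀, hx₀'.1, rfl⟩
  set f : (Fin d → ℝ) →L[ℝ] ℝ := l.comp (ContinuousLinearMap.inl ℝ (Fin d → ℝ) (Fin m → ℝ)) with hf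
  have hlsplit : ∀ (x : Fin d → ℝ) (y : Fin m → ℝ), l (x, y) = f x + l (0, y) := by
    intro x y
    have : ((x, y) : (Fin d → ℝ) × (Fin m → ℝ)) = (x, 0) + (0, y) := by simp
    rw [this, map_add]
    rfl
  set Fj : Fin m → Set (Fin d → ℝ) := fun j => { x ∈ P j | l (x, Pi.single j 1) = M } with hFj
  have hlev : ∀ j, { p ∈ C j | l p = M } =
      (Fj j) ×ˢ ({Pi.single j 1} : Set (Fin m → ℝ)) := by
    intro j
    ext ⟨p1, p2⟩
    simp only [hC, hFj, Set.mem_setOf_eq, Set.mem_prod, Set.mem_singleton_iff]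
    constructor
    · rintro ⟨⟨h1, h2⟩, h3⟩
      subst h2
      exact ⟨⟨h1, h3⟩, rfl⟩
    · rintro ⟨⟨h1, h3⟩, h2⟩
      subst h2
      exact ⟨⟨h1, rfl⟩, h3⟩
  have hFne : ∀ j, (Fj j).Nonempty := by
    intro j₀
    by_contra hempty
    rw [Set.not_nonempty_iff_eq_empty] at hempty
    refine hGS (Finset.univ.erase j₀)
      (fun h => (Finset.notMem_erase j₀ _) (h ▸ Finset.mem_univ j₀)) ?_
    have hsub : (⋃ j, { p ∈ C j | l p = M }) ⊆
        ⋃ k ∈ Finset.univ.erase j₀, C k := by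
      rintro p hp
      obtain ⟨j, hj⟩ := Set.mem_iUnion.1 hp
      rcases eq_or_ne j j₀ with rfl | hjj
      · rw [hlev j, hempty] at hj
        simp at hj
      · exact Set.mem_iUnion₂.2 ⟨j, Finset.mem_erase.2 ⟨hjj, Finset.mem_univ j⟩, hj.1⟩
    rw [hface]
    exact (convexHull_min (hsub.trans (subset_convexHull ℝ _))
      (convex_convexHull ℝ _) : _ ⊆ subCayleyPolytope d m V _)
  have hFface : ∀ j, Fj j = expFace f (P j) := by
    intro j
    have h1 : Fj j = { x ∈ P j | f x = M - l (0, Pi.single j 1) } := by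
      ext x
      simp only [hFj, Set.mem_setOf_eq]
      constructor
      · rintro ⟨h1, h2⟩
        rw [hlsplit] at h2
        exact ⟨h1, by linarith⟩
      · rintro ⟨h1, h2⟩
        rw [hlsplit x (Pi.single j 1)]
        exact ⟨h1, by linarith⟩
    rw [h1, expFace_eq_level]
    · intro x hx
      have := hub j (x, Pi.single j 1) (Set.mk_mem_prod hx rfl)
      rw [hlsplit] at this
      linarith
    · obtain ⟨x, hx1, hx2⟩ := hFne j
      rw [hlsplit] at hx2
      exact ⟨x, hx1, by linarith⟩
  refine ⟨f, fun j => (hFface j) ▸ hFne j, ?_⟩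
  have huni : (⋃ j, { p ∈ C j | l p = M }) =
      ⋃ j, (expFace f (P j)) ×ˢ ({Pi.single j 1} : Set (Fin m → ℝ)) :=
    Set.iUnion_congr fun j => by rw [hlev j, hFface j]
  rw [hface, huni]

/-- The Cayley polytope of a family of exposed faces in a common direction is a
qualifying exposed face of the Cayley polytope. -/
lemma cayley_face_construct (hm : 1 ≤ m)
    (hV : ∀ i, (V i).Finite) (hVne : ∀ i, (V i).Nonempty)
    (f : (Fin d → ℝ) →L[ℝ] ℝ) :
    IsExposed ℝ (cayleyPolytope d m V)
        (convexHull ℝ (⋃ j, (expFace f (convexHull ℝ (V j))) ×ˢ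
          ({Pi.single j 1} : Set (Fin m → ℝ)))) ∧
      (convexHull ℝ (⋃ j, (expFace f (convexHull ℝ (V j))) ×ˢ
          ({Pi.single j 1} : Set (Fin m → ℝ)))).Nonempty ∧
      ∀ S : Finset (Fin m), S ≠ Finset.univ →
        ¬ (convexHull ℝ (⋃ j, (expFace f (convexHull ℝ (V j))) ×ˢ
          ({Pi.single j 1} : Set (Fin m → ℝ)))) ⊆ subCayleyPolytope d m V S := by
  classical
  set P : Fin m → Set (Fin d → ℝ) := fun j => convexHull ℝ (V j) with hP
  set C : Fin m → Set ((Fin d → ℝ) × (Fin m → ℝ)) :=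
    fun j => (P j) ×ˢ ({Pi.single j 1} : Set (Fin m → ℝ)) with hC
  have hPne : ∀ j, (P j).Nonempty := fun j => (hVne j).convexHull
  have hPcp : ∀ j, IsCompact (P j) := fun j => (hV j).isCompact_convexHull ℝ
  have hfne : ∀ j, (expFace f (P j)).Nonempty := fun j => expFace_nonempty (hPcp j) (hPne j)
  choose z hz using hfne
  set Mj : Fin m → ℝ := fun j => f (z j) with hMj
  have hub' : ∀ j, ∀ x ∈ P j, f x ≤ Mj j := fun j x hx => (hz j).2 x hx
  have hattain : ∀ j, ∀ x ∈ expFace f (P j), f x = Mj j :=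
    fun j x hx => le_antisymm (hub' j x hx.1) (hx.2 (z j) (hz j).1)
  have hlevelface : ∀ j, expFace f (P j) = { x ∈ P j | f x = Mj j } :=
    fun j => expFace_eq_level (hub' j) ⟨z j, (hz j).1, hattain j (z j) (hz j)⟩
  -- the exposing functional on the product space
  set L : ((Fin d → ℝ) × (Fin m → ℝ)) →L[ℝ] ℝ :=
    f.comp (ContinuousLinearMap.fst ℝ (Fin d → ℝ) (Fin m → ℝ)) -
      ∑ j, Mj j • ((ContinuousLinearMap.proj j).comp
        (ContinuousLinearMap.snd ℝ (Fin d → ℝ) (Fin m → ℝ))) with hL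
  have hLeval : ∀ (x : Fin d → ℝ) (y : Fin m → ℝ), L (x, y) = f x - ∑ j, Mj j * y j := by
    intro x y
    simp [hL, ContinuousLinearMap.sum_apply]
  have hLvert : ∀ (x : Fin d → ℝ) (j : Fin m), L (x, Pi.single j 1) = f x - Mj j := by
    intro x j
    rw [hLeval]
    congr 1
    rw [Finset.sum_eq_single j]
    · rw [Pi.single_eq_same, mul_one]
    · intro k _ hkj
      rw [Pi.single_apply, if_neg hkj, mul_zero]
    · intro h; exact absurd (Finset.mem_univ j) h
  have hub : ∀ j, ∀ p ∈ C j, L p ≤ 0 := by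
    rintro j ⟨p1, p2⟩ ⟨h1, h2⟩
    simp only [Set.mem_singleton_iff] at h2
    subst h2
    rw [hLvert]
    linarith [hub' j p1 h1]
  have hj₀ : (0 : ℕ) < m := hm
  have hzmem : ∀ j, ((z j, Pi.single j 1) : (Fin d → ℝ) × (Fin m → ℝ)) ∈
      convexHull ℝ (⋃ k, C k) :=
    fun j => subset_convexHull ℝ _ (Set.mem_iUnion.2 ⟨j, Set.mk_mem_prod ((hz j).1) rfl⟩)
  have hface := expFace_convexHull_iUnion C L 0 hub
    ⟨(z ⟨0, hj₀⟩, Pi.single ⟨0, hj₀⟩ 1), hzmem _, by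
      rw [hLvert]; simp [hMj]⟩
  have hlev : ∀ j, { p ∈ C j | L p = 0 } =
      (expFace f (P j)) ×ˢ ({Pi.single j 1} : Set (Fin m → ℝ)) := by
    intro j
    ext ⟨p1, p2⟩
    simp only [hC, Set.mem_setOf_eq, Set.mem_prod, Set.mem_singleton_iff]
    constructor
    · rintro ⟨⟨h1, h2⟩, h3⟩
      subst h2
      rw [hLvert] at h3
      rw [hlevelface j]
      exact ⟨⟨h1, by linarith⟩, rfl⟩
    · rintro ⟨h1, h2⟩
      subst h2
      rw [hlevelface j] at h1
      rw [hLvert]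
      exact ⟨⟨h1.1, rfl⟩, by linarith [h1.2]⟩
  have hGface : convexHull ℝ (⋃ j, (expFace f (P j)) ×ˢ
      ({Pi.single j 1} : Set (Fin m → ℝ))) = expFace L (cayleyPolytope d m V) := by
    rw [show cayleyPolytope d m V = convexHull ℝ (⋃ j, C j) from rfl, hface]
    exact congrArg _ (Set.iUnion_congr fun j => (hlev j).symm)
  refine ⟨?_, ?_, ?_⟩
  · intro _
    exact ⟨L, hGface⟩
  · exact ⟨(z ⟨0, hj₀⟩, Pi.single ⟨0, hj₀⟩ 1), subset_convexHull ℝ _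
      (Set.mem_iUnion.2 ⟨⟨0, hj₀⟩, Set.mk_mem_prod (hz ⟨0, hj₀⟩) rfl⟩)⟩
  · intro S hS hsub
    obtain ⟨j, hj⟩ : ∃ j, j ∉ S := by
      by_contra h
      push_neg at h
      exact hS (Finset.eq_univ_iff_forall.2 h)
    have hmem : ((z j, Pi.single j 1) : (Fin d → ℝ) × (Fin m → ℝ)) ∈
        subCayleyPolytope d m V S :=
      hsub (subset_convexHull ℝ _ (Set.mem_iUnion.2 ⟨j, Set.mk_mem_prod (hz j) rfl⟩))
    have hzero : subCayleyPolytope d m V S ⊆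
        { p : (Fin d → ℝ) × (Fin m → ℝ) | p.2 j = 0 } := by
      refine convexHull_min ?_ (convex_hyperplane
        (IsLinearMap.mk (fun p q => rfl) (fun c p => rfl)) 0)
      rintro p hp
      obtain ⟨k, hk⟩ := Set.mem_iUnion.1 hp
      obtain ⟨hkS, hpk⟩ := Set.mem_iUnion.1 hk
      have h2 : p.2 = Pi.single k 1 := hpk.2
      have hkj : k ≠ j := fun h => hj (h ▸ hkS)
      show p.2 j = 0
      rw [h2, Pi.single_apply, if_neg (Ne.symm hkj)]
    have := hzero hmem
    simp only [Set.mem_setOf_eq, Pi.single_eq_same] at this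
    exact one_ne_zero this

/-- The canonical decomposition candidate for the `j`-th summand of a face `F` of the
Minkowski sum. -/
def PhiSet (d m : ℕ) (V : Fin m → Set (Fin d → ℝ)) (F : Set (Fin d → ℝ)) (j : Fin m) :
    Set (Fin d → ℝ) :=
  { x ∈ convexHull ℝ (V j) | ∃ y : Fin m → (Fin d → ℝ),
      (∀ k, y k ∈ convexHull ℝ (V k)) ∧ y j = x ∧ ∑ k, y k ∈ F }


/-- The structure extracted from a qualifying face of the Cayley polytope. -/
lemma cayley_fwd
    {G : Set ((Fin d → ℝ) × (Fin m → ℝ))}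
    (hGexp : IsExposed ℝ (cayleyPolytope d m V) G) (hGne : G.Nonempty)
    (hGS : ∀ S : Finset (Fin m), S ≠ Finset.univ → ¬ G ⊆ subCayleyPolytope d m V S) :
    ∃ f : (Fin d → ℝ) →L[ℝ] ℝ,
      (∀ j, (expFace f (convexHull ℝ (V j))).Nonempty) ∧
      G = convexHull ℝ (⋃ j, (expFace f (convexHull ℝ (V j))) ×ˢ
        ({Pi.single j 1} : Set (Fin m → ℝ))) ∧
      (∀ j, { x : Fin d → ℝ | (x, Pi.single j 1) ∈ G } = expFace f (convexHull ℝ (V j))) ∧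
      (∑ j, { x : Fin d → ℝ | (x, Pi.single j 1) ∈ G }) =
        expFace f (∑ j, convexHull ℝ (V j)) := by
  obtain ⟨f, hfne, hrep⟩ := cayley_face_rep hGexp hGne hGS
  have hslice : ∀ j, { x : Fin d → ℝ | (x, Pi.single j 1) ∈ G } =
      expFace f (convexHull ℝ (V j)) := by
    intro j
    rw [hrep]
    exact cayley_slice _ (fun k => convex_expFace (convex_convexHull ℝ _)) j
  refine ⟨f, hfne, hrep, hslice, ?_⟩
  calc ∑ j, { x : Fin d → ℝ | (x, Pi.single j 1) ∈ G }
      = ∑ j, expFace f (convexHull ℝ (V j)) :=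
        Finset.sum_congr rfl fun j _ => hslice j
    _ = expFace f (∑ j, convexHull ℝ (V j)) := (expFace_sum f Finset.univ _).symm

theorem cayley_face_count' (hm : 1 ≤ m)
    (hV : ∀ i, (V i).Finite) (hVne : ∀ i, (V i).Nonempty)
    (i : ℕ) :
    Nat.card {G : Set ((Fin d → ℝ) × (Fin m → ℝ)) //
        IsExposed ℝ (cayleyPolytope d m V) G ∧ G.Nonempty ∧
          Module.finrank ℝ (affineSpan ℝ G).direction = i + m - 1 ∧
          ∀ S : Finset (Fin m), S ≠ Finset.univ → ¬ G ⊆ subCayleyPolytope d m V S} =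
      Nat.card {F : Set (Fin d → ℝ) //
        IsExposed ℝ (∑ j : Fin m, convexHull ℝ (V j)) F ∧ F.Nonempty ∧
          Module.finrank ℝ (affineSpan ℝ F).direction = i} := by
  classical
  have hPcp : ∀ j, IsCompact (convexHull ℝ (V j)) := fun j => (hV j).isCompact_convexHull ℝ
  have hPne : ∀ j, (convexHull ℝ (V j)).Nonempty := fun j => (hVne j).convexHull
  have hfne : ∀ f : (Fin d → ℝ) →L[ℝ] ℝ, ∀ j, (expFace f (convexHull ℝ (V j))).Nonempty :=
    fun f j => expFace_nonempty (hPcp j) (hPne j)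
  -- the dimension bridge
  have hdimb : ∀ f : (Fin d → ℝ) →L[ℝ] ℝ,
      Module.finrank ℝ (affineSpan ℝ (convexHull ℝ (⋃ j,
          (expFace f (convexHull ℝ (V j))) ×ˢ
            ({Pi.single j 1} : Set (Fin m → ℝ))))).direction =
        Module.finrank ℝ (affineSpan ℝ (expFace f (∑ j, convexHull ℝ (V j)))).direction
          + (m - 1) := by
    intro f
    rw [direction_affineSpan, direction_affineSpan, vectorSpan_convexHull,
      expFace_sum f Finset.univ]
    exact dim_cayley hm _ (hfne f)
  -- forward map obligations
  have htoFun : ∀ G : Set ((Fin d → ℝ) × (Fin m → ℝ)),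
      (IsExposed ℝ (cayleyPolytope d m V) G ∧ G.Nonempty ∧
        Module.finrank ℝ (affineSpan ℝ G).direction = i + m - 1 ∧
        ∀ S : Finset (Fin m), S ≠ Finset.univ → ¬ G ⊆ subCayleyPolytope d m V S) →
      (IsExposed ℝ (∑ j : Fin m, convexHull ℝ (V j))
          (∑ j, { x : Fin d → ℝ | (x, Pi.single j 1) ∈ G }) ∧
        (∑ j, { x : Fin d → ℝ | (x, Pi.single j 1) ∈ G }).Nonempty ∧
        Module.finrank ℝ (affineSpan ℝ
          (∑ j, { x : Fin d → ℝ | (x, Pi.single j 1) ∈ G })).direction = i) := by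
    rintro G ⟨hexp, hne, hdim, hS⟩
    obtain ⟨f, hfne', hrep, hslice, hsum⟩ := cayley_fwd hexp hne hS
    refine ⟨?_, ?_, ?_⟩
    · rw [hsum]
      exact fun _ => ⟨f, rfl⟩
    · rw [hsum, expFace_sum f Finset.univ]
      exact sum_sets_nonempty _ _ fun j _ => hfne f j
    · rw [hrep, hdimb f] at hdim
      rw [hsum]
      omega
  -- inverse map obligations
  have hinvFun : ∀ F : Set (Fin d → ℝ),
      (IsExposed ℝ (∑ j : Fin m, convexHull ℝ (V j)) F ∧ F.Nonempty ∧
        Module.finrank ℝ (affineSpan ℝ F).direction = i) →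
      (IsExposed ℝ (cayleyPolytope d m V)
          (convexHull ℝ (⋃ j, (PhiSet d m V F j) ×ˢ
            ({Pi.single j 1} : Set (Fin m → ℝ)))) ∧
        (convexHull ℝ (⋃ j, (PhiSet d m V F j) ×ˢ
            ({Pi.single j 1} : Set (Fin m → ℝ)))).Nonempty ∧
        Module.finrank ℝ (affineSpan ℝ (convexHull ℝ (⋃ j, (PhiSet d m V F j) ×ˢ
            ({Pi.single j 1} : Set (Fin m → ℝ))))).direction = i + m - 1 ∧
        ∀ S : Finset (Fin m), S ≠ Finset.univ →
          ¬ (convexHull ℝ (⋃ j, (PhiSet d m V F j) ×ˢ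
            ({Pi.single j 1} : Set (Fin m → ℝ)))) ⊆ subCayleyPolytope d m V S) := by
    rintro F ⟨hexp, hne, hdim⟩
    obtain ⟨f, hf⟩ := hexp hne
    have hf' : F = expFace f (∑ j, convexHull ℝ (V j)) := hf
    have hPhi : ∀ j, PhiSet d m V F j = expFace f (convexHull ℝ (V j)) := by
      intro j
      rw [PhiSet, hf']
      exact decomp_eq_expFace f _ (hfne f) j
    have hGeq : convexHull ℝ (⋃ j, (PhiSet d m V F j) ×ˢ
        ({Pi.single j 1} : Set (Fin m → ℝ))) =
        convexHull ℝ (⋃ j, (expFace f (convexHull ℝ (V j))) ×ˢ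
          ({Pi.single j 1} : Set (Fin m → ℝ))) :=
      congrArg _ (Set.iUnion_congr fun j => by rw [hPhi j])
    obtain ⟨hexp', hne', hS'⟩ := cayley_face_construct hm hV hVne f
    refine ⟨hGeq ▸ hexp', hGeq ▸ hne', ?_, hGeq ▸ hS'⟩
    rw [hGeq, hdimb f, ← hf', hdim]
    omega
  refine Nat.card_congr ⟨fun G => ⟨∑ j, { x : Fin d → ℝ | (x, Pi.single j 1) ∈ G.1 },
      htoFun G.1 G.2⟩,
    fun F => ⟨convexHull ℝ (⋃ j, (PhiSet d m V F.1 j) ×ˢ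
      ({Pi.single j 1} : Set (Fin m → ℝ))), hinvFun F.1 F.2⟩, ?_, ?_⟩
  · rintro ⟨G, hG⟩
    obtain ⟨hexp, hne, hdim, hS⟩ := hG
    apply Subtype.ext
    obtain ⟨f, hfne', hrep, hslice, hsum⟩ := cayley_fwd hexp hne hS
    show convexHull ℝ (⋃ j, (PhiSet d m V (∑ j, { x : Fin d → ℝ | (x, Pi.single j 1) ∈ G }) j)
      ×ˢ ({Pi.single j 1} : Set (Fin m → ℝ))) = G
    have hPhi : ∀ j, PhiSet d m V (∑ j, { x : Fin d → ℝ | (x, Pi.single j 1) ∈ G }) j =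
        expFace f (convexHull ℝ (V j)) := by
      intro j
      rw [PhiSet, hsum]
      exact decomp_eq_expFace f _ (hfne f) j
    rw [Set.iUnion_congr fun j => by rw [hPhi j]]
    exact hrep.symm
  · rintro ⟨F, hF⟩
    obtain ⟨hexp, hne, hdim⟩ := hF
    apply Subtype.ext
    obtain ⟨f, hf⟩ := hexp hne
    have hf' : F = expFace f (∑ j, convexHull ℝ (V j)) := hf
    have hPhi : ∀ j, PhiSet d m V F j = expFace f (convexHull ℝ (V j)) := by
      intro j
      rw [PhiSet, hf']
      exact decomp_eq_expFace f _ (hfne f) j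
    show (∑ j, { x : Fin d → ℝ | (x, Pi.single j 1) ∈
      convexHull ℝ (⋃ j, (PhiSet d m V F j) ×ˢ ({Pi.single j 1} : Set (Fin m → ℝ))) }) = F
    have hslice : ∀ j, { x : Fin d → ℝ | (x, Pi.single j 1) ∈
        convexHull ℝ (⋃ k, (PhiSet d m V F k) ×ˢ ({Pi.single k 1} : Set (Fin m → ℝ))) } =
        PhiSet d m V F j :=
      fun j => cayley_slice _ (fun k => by
        rw [hPhi k]; exact convex_expFace (convex_convexHull ℝ _)) j
    calc (∑ j, { x : Fin d → ℝ | (x, Pi.single j 1) ∈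
          convexHull ℝ (⋃ k, (PhiSet d m V F k) ×ˢ ({Pi.single k 1} : Set (Fin m → ℝ))) })
        = ∑ j, PhiSet d m V F j := Finset.sum_congr rfl fun j _ => hslice j
      _ = ∑ j, expFace f (convexHull ℝ (V j)) := Finset.sum_congr rfl fun j _ => hPhi j
      _ = expFace f (∑ j, convexHull ℝ (V j)) := (expFace_sum f Finset.univ _).symm
      _ = F := hf'.symm


end Concrete

/-- Face-count identity `f_{i+m-1}(T°_{[m]}) = f_i(|P_{[m]}|)`: the number of
`(i+m-1)`-dimensional nonempty exposed faces of the Cayley polytope not contained in any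
proper sub-Cayley polytope equals the number of `i`-dimensional nonempty exposed faces of
the Minkowski sum `P 1 + ⋯ + P m`. -/
theorem cayley_face_count (d m : ℕ) (hm : 1 ≤ m)
    (V : Fin m → Set (Fin d → ℝ)) (hV : ∀ i, (V i).Finite) (hVne : ∀ i, (V i).Nonempty)
    (i : ℕ) :
    Nat.card {G : Set ((Fin d → ℝ) × (Fin m → ℝ)) //
        IsExposed ℝ (cayleyPolytope d m V) G ∧ G.Nonempty ∧
          Module.finrank ℝ (affineSpan ℝ G).direction = i + m - 1 ∧
          ∀ S : Finset (Fin m), S ≠ Finset.univ → ¬ G ⊆ subCayleyPolytope d m V S} =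
      Nat.card {F : Set (Fin d → ℝ) //
        IsExposed ℝ (∑ j : Fin m, convexHull ℝ (V j)) F ∧ F.Nonempty ∧
          Module.finrank ℝ (affineSpan ℝ F).direction = i} :=
  cayley_face_count' hm hV hVne i
end
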